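/- arXiv:math/0408152 — 3 statements merged into one kernel-verified Lean document; each statement's English description precedes it below -/
import Mathlib

section
/- Let g be a finite-dimensional real vector space with inner product g0, let h ⊆ g be a subspace, let k ⊆ g be a subspace with h ⊥ k, and let j : h → k be a linear map with g0-transpose j^t : g → h (so j^t vanishes on the orthogonal complement of k and maps into h). Define the inner product g_j = (Id + j^t)^* g0. Then the subspace S = { X − j^t(X) : X ∈ k } is g_j-orthogonal to h, and the linear map S → k given by X − j^t(X) ↦ X is a linear isometry from (S, g_j|_S) to (k, g0|_k). -/
open scoped RealInnerProductSpace

/-- With `h ⊥ k`, `j : h → k`, and `jt : g → h` the `g0`-transpose of `j`,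
the subspace `S = {X - jt X : X ∈ k}` is `g_j`-orthogonal to `h`, and
`X - jt X ↦ X` is a linear isometry from `(S, g_j)` to `(k, g0)`. -/
theorem stmt_1
    {g : Type*} [NormedAddCommGroup g] [InnerProductSpace ℝ g] [FiniteDimensional ℝ g]
    (h k : Submodule ℝ g)
    (horth : ∀ (Z : h) (X : k), ⟪(Z : g), (X : g)⟫ = 0)
    (j : h →ₗ[ℝ] k) (jt : g →ₗ[ℝ] h)
    (htranspose : ∀ (X : g) (Z : h), ⟪((jt X : h) : g), (Z : g)⟫ = ⟪X, ((j Z : k) : g)⟫) :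
    -- `S` is `g_j`-orthogonal to `h`:
    (∀ (X : k) (Z : h),
      ⟪((X : g) - ((jt (X : g) : h) : g)) + ((jt ((X : g) - ((jt (X : g) : h) : g)) : h) : g),
        (Z : g) + ((jt (Z : g) : h) : g)⟫ = 0) ∧
    -- `X - jt X ↦ X` is a linear isometry from `(S, g_j|_S)` to `(k, g0|_k)`:
    (∀ (X Y : k),
      ⟪((X : g) - ((jt (X : g) : h) : g)) + ((jt ((X : g) - ((jt (X : g) : h) : g)) : h) : g),
        ((Y : g) - ((jt (Y : g) : h) : g)) + ((jt ((Y : g) - ((jt (Y : g) : h) : g)) : h) : g)⟫ =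
      ⟪(X : g), (Y : g)⟫) := by
  have h2 : ∀ (b : k) (a : h), ⟪(b : g), (a : g)⟫ = 0 := fun b a => by
    rw [real_inner_comm]; exact horth a b
  have h4 : ∀ (a Z : h), ⟪((jt (a : g) : h) : g), (Z : g)⟫ = 0 := fun a Z => by
    rw [htranspose]; exact horth a (j Z)
  have hvec : ∀ X : k,
      ((X : g) - ((jt (X : g) : h) : g)) + ((jt ((X : g) - ((jt (X : g) : h) : g)) : h) : g)
        = (X : g) - ((jt ((jt (X : g) : h) : g) : h) : g) := by
    intro X
    simp only [map_sub, Submodule.coe_sub]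
    abel
  constructor
  · intro X Z
    rw [hvec]
    simp [inner_sub_left, inner_add_right, h2, h4]
  · intro X Y
    rw [hvec, hvec]
    simp [inner_sub_left, inner_sub_right, horth, h2, h4]
end

section
/- Let g, g0, h, k be as follows: g a compact Lie algebra with Ad-invariant inner product g0, h and k orthogonal subspaces with [h,k] = 0. Let j, j' : h → k be linear maps with transposes j^t, j'^t : g → h. Suppose φ : g → g is a linear isometry of g0 such that φ(h) = h, φ(k) = k, and φ maps the g_j-orthogonal complement of h onto the g_{j'}-orthogonal complement of h, where g_j = (Id + j^t)^* g0 and g_{j'} = (Id + j'^t)^* g0. Let C = φ|_h ∈ O(h). If for every X ∈ k the vector φ(X) − C(j^t(X)) lies in the g_{j'}-orthogonal complement of h, then C ∘ j^t = j'^t ∘ φ on k, and consequently j(z) = φ^{-1}( j'(C z) ) for all z ∈ h. -/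
open scoped RealInnerProductSpace

/-- Key linear-algebra step of Lemma 4.4.  If `φ` is a `g0`-isometry of `g`
preserving `h` and `k`, carrying the `g_j`-orthogonal complement of `h` onto the
`g_{j'}`-orthogonal complement of `h`, with `C = φ|_h`, and for every `X ∈ k` the vector
`φ(X) - C(jᵗ X)` lies in the `g_{j'}`-orthogonal complement of `h`, then
`C ∘ jᵗ = j'ᵗ ∘ φ` on `k` and `j(z) = φ⁻¹(j'(Cz))` for all `z ∈ h`. -/
theorem stmt_7
    {g : Type*} [NormedAddCommGroup g] [InnerProductSpace ℝ g] [FiniteDimensional ℝ g]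
    (h k : Submodule ℝ g)
    (horth : ∀ (Z : h) (X : k), ⟪(Z : g), (X : g)⟫ = 0)
    (j j' : h →ₗ[ℝ] k) (jt jt' : g →ₗ[ℝ] h)
    (htr : ∀ (X : g) (Z : h), ⟪((jt X : h) : g), (Z : g)⟫ = ⟪X, ((j Z : k) : g)⟫)
    (htr' : ∀ (X : g) (Z : h), ⟪((jt' X : h) : g), (Z : g)⟫ = ⟪X, ((j' Z : k) : g)⟫)
    (φ : g ≃ₗᵢ[ℝ] g)
    (hφh : ∀ Z : h, φ (Z : g) ∈ h) (hφk : ∀ X : k, φ (X : g) ∈ k)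
    (C : h →ₗ[ℝ] h) (hC : ∀ Z : h, ((C Z : h) : g) = φ (Z : g))
    -- φ maps the g_j-orthogonal complement of h onto the g_{j'}-orthogonal complement of h
    (hperp : ∀ W : g, (∀ Z : h, ⟪W + ((jt W : h) : g), (Z : g) + ((jt (Z : g) : h) : g)⟫ = 0) →
      (∀ Z : h, ⟪φ W + ((jt' (φ W) : h) : g), (Z : g) + ((jt' (Z : g) : h) : g)⟫ = 0))
    -- for every X ∈ k, φ(X) - C(jᵗ X) lies in the g_{j'}-orthogonal complement of h
    (hmain : ∀ X : k, ∀ Z : h,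
      ⟪(φ (X : g) - ((C (jt (X : g)) : h) : g)) +
          ((jt' (φ (X : g) - ((C (jt (X : g)) : h) : g)) : h) : g),
        (Z : g) + ((jt' (Z : g) : h) : g)⟫ = 0) :
    (∀ X : k, C (jt (X : g)) = jt' (φ (X : g))) ∧
    (∀ z : h, ((j z : k) : g) = φ.symm ((j' (C z) : k) : g)) := by

  -- jt' vanishes on h
  have hjt'0 : ∀ Z : h, jt' (Z : g) = 0 := by
    intro Z
    have h1 : ⟪((jt' (Z : g) : h) : g), ((jt' (Z : g) : h) : g)⟫ = 0 := by
      rw [htr' (Z : g) (jt' (Z : g))]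
      exact horth Z (j' (jt' (Z : g)))
    have h2 : ((jt' (Z : g) : h) : g) = 0 := inner_self_eq_zero.mp h1
    exact Subtype.ext h2
  -- Part 1
  have part1 : ∀ X : k, C (jt (X : g)) = jt' (φ (X : g)) := by
    intro X
    have key : ∀ Z : h, ⟪((jt' (φ (X : g)) : h) : g) - ((C (jt (X : g)) : h) : g), (Z : g)⟫ = 0 := by
      intro Z
      have hm := hmain X Z
      rw [hjt'0 Z] at hm
      simp only [ZeroMemClass.coe_zero, add_zero, map_sub] at hm
      have hz : jt' ((C (jt (X : g)) : h) : g) = 0 := hjt'0 _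
      rw [hz] at hm
      have hk0 : ⟪φ (X : g), (Z : g)⟫ = 0 := by
        have := horth Z ⟨φ (X : g), hφk X⟩
        simpa [real_inner_comm] using this
      simp only [sub_zero] at hm
      have expand : ⟪(φ (X : g) - ((C (jt (X : g)) : h) : g)) + ((jt' (φ (X : g)) : h) : g), (Z : g)⟫
          = ⟪φ (X : g), (Z : g)⟫ + ⟪((jt' (φ (X : g)) : h) : g) - ((C (jt (X : g)) : h) : g), (Z : g)⟫ := by
        rw [← inner_add_left]; congr 1; abel
      rw [expand, hk0, zero_add] at hm
      exact hm
    have hd : ((jt' (φ (X : g)) : h) : g) - ((C (jt (X : g)) : h) : g) = 0 := by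
      have := key (jt' (φ (X : g)) - C (jt (X : g)))
      rw [show (((jt' (φ (X : g)) - C (jt (X : g)) : h)) : g) = ((jt' (φ (X : g)) : h) : g) - ((C (jt (X : g)) : h) : g) from rfl] at this
      exact inner_self_eq_zero.mp this
    have : ((C (jt (X : g)) : h) : g) = ((jt' (φ (X : g)) : h) : g) := by
      have := sub_eq_zero.mp hd; exact this.symm
    exact Subtype.ext this
  refine ⟨part1, ?_⟩
  -- k is mapped onto k by φ
  have hmap : Submodule.map (φ.toLinearEquiv : g →ₗ[ℝ] g) k = k := by
    apply Submodule.eq_of_le_of_finrank_eq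
    · rintro x ⟨y, hy, rfl⟩
      exact hφk ⟨y, hy⟩
    · exact LinearEquiv.finrank_map_eq φ.toLinearEquiv k
  intro z
  set D : g := φ ((j z : k) : g) - ((j' (C z) : k) : g) with hD
  have hDk : D ∈ k := by
    exact sub_mem (hφk (j z)) (j' (C z)).2
  have horthD : ∀ X : k, ⟪D, φ (X : g)⟫ = 0 := by
    intro X
    have e1 : ⟪φ ((j z : k) : g), φ (X : g)⟫ = ⟪((jt (X : g) : h) : g), (z : g)⟫ := by
      rw [φ.inner_map_map]
      rw [htr (X : g) z]
      exact real_inner_comm _ _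
    have e2 : ⟪((j' (C z) : k) : g), φ (X : g)⟫ = ⟪((jt (X : g) : h) : g), (z : g)⟫ := by
      rw [real_inner_comm, ← htr' (φ (X : g)) (C z), ← part1 X]
      rw [hC (jt (X : g)), hC z]
      exact φ.inner_map_map _ _
    rw [hD, inner_sub_left, e1, e2, sub_self]
  have hDeq : D = 0 := by
    obtain ⟨y, hy, hyeq⟩ : D ∈ Submodule.map (φ.toLinearEquiv : g →ₗ[ℝ] g) k := hmap.symm ▸ hDk
    have : ⟪D, D⟫ = 0 := by
      have := horthD ⟨y, hy⟩
      simp only at this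
      rw [← hyeq] at this ⊢
      convert this using 2
      rfl
    exact inner_self_eq_zero.mp this
  have : φ ((j z : k) : g) = ((j' (C z) : k) : g) := sub_eq_zero.mp hDeq
  rw [← this]
  simp
end

section
/- Let g be a compact Lie algebra whose outer automorphism group Out(g) = Aut(g)/Inn(g) is finite, let h be a real inner product space, and let F be a family of linear maps h → g that are pairwise nonequivalent (no two distinct j, j' ∈ F satisfy j(z) = Ad(A) j'(Cz) for some A ∈ G, C ∈ O(h)). Fix j0 ∈ F and suppose every j ∈ F with g_j isometric to g_{j0} satisfies: there exist an automorphism α of g and C ∈ O(h) with j(z) = α(j0(Cz)) for all z ∈ h. Then the set { j ∈ F : g_j is isometric to g_{j0} } has cardinality at most |Out(g)|; in particular it is finite. -/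
/-- Let `Aut` be the automorphism group of the compact Lie algebra `g`
(acting on `g` via `act`), `N ⊴ Aut` the inner automorphisms, with `Out = Aut/N` finite.
If `F` is a family of pairwise nonequivalent linear maps `h → g` (equivalence via an
inner automorphism and an orthogonal map of `h`), `j₀ ∈ F`, and every `j ∈ F` whose
metric `g_j` is isometric to `g_{j₀}` satisfies `j = α ∘ j₀ ∘ C` for some automorphism
`α` and `C ∈ O(h)`, then `{j ∈ F : g_j isometric to g_{j₀}}` has at most `|Out|`
elements; in particular it is finite. -/
theorem stmt_15
    {g : Type*} [LieRing g] [LieAlgebra ℝ g]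
    {h : Type*} [NormedAddCommGroup h] [InnerProductSpace ℝ h]
    {Aut : Type*} [Group Aut] (act : Aut →* (g →ₗ[ℝ] g))
    (hact_bracket : ∀ (α : Aut) (X Y : g), act α ⁅X, Y⁆ = ⁅act α X, act α Y⁆)
    (hact_bij : ∀ α : Aut, Function.Bijective (act α))
    (N : Subgroup Aut) [N.Normal] (hOutFin : Finite (Aut ⧸ N))
    (F : Set (h →ₗ[ℝ] g)) (j₀ : h →ₗ[ℝ] g) (hj₀ : j₀ ∈ F)
    -- `Isom j j'` stands for "`g_j` is isometric to `g_{j'}`"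
    (Isom : (h →ₗ[ℝ] g) → (h →ₗ[ℝ] g) → Prop)
    -- the maps in F are pairwise nonequivalent
    (hpairwise : ∀ j ∈ F, ∀ j' ∈ F, j ≠ j' →
      ¬ ∃ α ∈ N, ∃ C : h ≃ₗᵢ[ℝ] h, ∀ z : h, j z = act α (j' (C z)))
    -- any isometry of the metrics comes from an automorphism of g and C ∈ O(h)
    (hiso : ∀ j ∈ F, Isom j j₀ →
      ∃ (α : Aut) (C : h ≃ₗᵢ[ℝ] h), ∀ z : h, j z = act α (j₀ (C z))) :
    {j ∈ F | Isom j j₀}.Finite ∧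
    Nat.card {j ∈ F | Isom j j₀} ≤ Nat.card (Aut ⧸ N) := by
  classical
  set S : Set (h →ₗ[ℝ] g) := {j ∈ F | Isom j j₀} with hS
  have hmem : ∀ j ∈ S, j ∈ F ∧ Isom j j₀ := fun j hj => hj
  let f : S → Aut ⧸ N := fun j =>
    QuotientGroup.mk (Classical.choose (hiso j (hmem j j.2).1 (hmem j j.2).2))
  have hcomp : ∀ (a b : Aut) (x : g), act a (act b x) = act (a * b) x := by
    intro a b x
    rw [map_mul]; rfl
  have hf : Function.Injective f := by
    rintro ⟨j, hj⟩ ⟨j', hj'⟩ hfe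
    obtain ⟨hjF, hjI⟩ := hmem j hj
    obtain ⟨hjF', hjI'⟩ := hmem j' hj'
    obtain ⟨C, hC⟩ := Classical.choose_spec (hiso j hjF hjI)
    obtain ⟨C', hC'⟩ := Classical.choose_spec (hiso j' hjF' hjI')
    set α := Classical.choose (hiso j hjF hjI)
    set α' := Classical.choose (hiso j' hjF' hjI')
    have hq : (α : Aut ⧸ N) = α' := hfe
    have hN : α⁻¹ * α' ∈ N := QuotientGroup.eq.mp hq
    have hN2 : α * α'⁻¹ ∈ N := by
      have := N.inv_mem hN
      simpa [mul_assoc] using Subgroup.Normal.conj_mem ‹N.Normal› _ this α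
    have hjj : j = j' := by
      by_contra hne'
      refine hpairwise j hjF j' hjF' hne' ⟨α * α'⁻¹, hN2, C.trans C'.symm, ?_⟩
      intro z
      have h2 : j₀ (C z) = act α'⁻¹ (j' (C'.symm (C z))) := by
        have h3 := hC' (C'.symm (C z))
        rw [C'.apply_symm_apply] at h3
        rw [h3, hcomp, inv_mul_cancel, map_one, Module.End.one_apply]
      rw [hC z, h2, hcomp]
      simp [LinearIsometryEquiv.trans_apply]
    exact Subtype.ext hjj
  have : Finite S := Finite.of_injective f hf
  exact ⟨Set.toFinite S, Nat.card_le_card_of_injective f hf⟩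
end
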